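/- Every p-group that is semiabelian (as a finite group) is a semiabelian p-group, i.e., S ∩ P = S_p. -/

import Mathlib

open scoped Pointwise

/-- The minimal family of finite groups containing the trivial group, closed under
semidirect products with finite abelian groups, and closed under quotients. -/
inductive IsSemiabelian : ∀ (G : Type) [Group G], Prop where
  | triv : IsSemiabelian PUnit
  | sdp {A H : Type} [CommGroup A] [Group H] [Finite A] [Finite H]
      (φ : H →* MulAut A) (hH : IsSemiabelian H) : IsSemiabelian (A ⋊[φ] H)
  | quot {G₁ G₂ : Type} [Group G₁] [Group G₂] [Finite G₁] (f : G₁ →* G₂)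
      (hf : Function.Surjective f) (hG : IsSemiabelian G₁) : IsSemiabelian G₂

/-- The minimal family of finite p-groups containing the trivial group, closed under
semidirect products with abelian p-groups, and closed under quotients. -/
inductive IsSemiabelianP (p : ℕ) : ∀ (G : Type) [Group G], Prop where
  | triv : IsSemiabelianP p PUnit
  | sdp {A H : Type} [CommGroup A] [Group H] [Finite A] [Finite H]
      (hA : IsPGroup p A) (hH' : IsPGroup p H)
      (φ : H →* MulAut A) (hH : IsSemiabelianP p H) : IsSemiabelianP p (A ⋊[φ] H)
  | quot {G₁ G₂ : Type} [Group G₁] [Group G₂] [Finite G₁] (f : G₁ →* G₂)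
      (hf : Function.Surjective f) (hG : IsSemiabelianP p G₁) : IsSemiabelianP p G₂

/-- A semidirect product is finite when the factors are. -/
private lemma sdp_finite {N G : Type} [Group N] [Group G] [Finite N] [Finite G]
    (φ : G →* MulAut N) : Finite (N ⋊[φ] G) :=
  Finite.of_injective (fun x : N ⋊[φ] G => (x.left, x.right))
    (fun a b h => by
      cases a; cases b
      simpa [Prod.ext_iff, SemidirectProduct.ext_iff] using h)

/-- A semidirect product of `p`-groups is a `p`-group. -/
private lemma sdp_isPGroup {p : ℕ} {N G : Type} [Group N] [Group G]
    (φ : G →* MulAut N) (hN : IsPGroup p N) (hG : IsPGroup p G) :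
    IsPGroup p (N ⋊[φ] G) := by
  have hker : IsPGroup p (SemidirectProduct.rightHom (φ := φ)).ker := by
    rw [← SemidirectProduct.range_inl_eq_ker_rightHom]
    exact hN.of_surjective (SemidirectProduct.inl (φ := φ)).rangeRestrict
      (SemidirectProduct.inl (φ := φ)).rangeRestrict_surjective
  have h2 := (hG.to_subgroup ⊤).comap_of_ker_isPGroup SemidirectProduct.rightHom hker
  rw [Subgroup.comap_top] at h2
  exact h2.of_equiv Subgroup.topEquiv

/-- Structure lemma: any nontrivial quotient `G` of a semiabelian group decomposes as
`G = A · U` with `A` abelian normal and `U` a proper semiabelian subgroup. -/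
private lemma semiabelian_decomp {G₁ : Type} [Group G₁] (h : IsSemiabelian G₁) :
    ∀ (G : Type) [Group G] (f : G₁ →* G), Function.Surjective f → Nontrivial G →
      ∃ (A U : Subgroup G), A.Normal ∧ IsMulCommutative A ∧ IsSemiabelian U ∧ U ≠ ⊤ ∧
        A ⊔ U = ⊤ := by
  induction h with
  | triv =>
    intro G _ f hf hnt
    haveI := hf.subsingleton
    obtain ⟨a, b, hab⟩ := hnt
    exact absurd (Subsingleton.elim a b) hab
  | @sdp A H _ _ _ _ φ hH ih =>
    intro G _ f hf hnt
    by_cases hU : (f.comp (SemidirectProduct.inr (φ := φ))).range = ⊤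
    · exact ih G (f.comp SemidirectProduct.inr) (MonoidHom.range_eq_top.mp hU) hnt
    · haveI hnorm : (SemidirectProduct.inl (φ := φ)).range.Normal := by
        rw [SemidirectProduct.range_inl_eq_ker_rightHom]; infer_instance
      refine ⟨((SemidirectProduct.inl (φ := φ)).range).map f,
        (f.comp (SemidirectProduct.inr (φ := φ))).range, hnorm.map f hf, ?_, ?_, hU, ?_⟩
      · constructor
        constructor
        rintro ⟨x, hx⟩ ⟨y, hy⟩
        obtain ⟨x', ⟨a, rfl⟩, rfl⟩ := hx
        obtain ⟨y', ⟨b, rfl⟩, rfl⟩ := hy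
        ext
        simp only [Subgroup.coe_mul]
        rw [← map_mul, ← map_mul, mul_comm a b, map_mul, map_mul]
      · exact IsSemiabelian.quot (f.comp SemidirectProduct.inr).rangeRestrict
          (f.comp SemidirectProduct.inr).rangeRestrict_surjective hH
      · rw [eq_top_iff]
        intro g _
        obtain ⟨x, rfl⟩ := hf g
        rw [← SemidirectProduct.inl_left_mul_inr_right x, map_mul]
        exact mul_mem (Subgroup.mem_sup_left ⟨SemidirectProduct.inl x.left, ⟨x.left, rfl⟩, rfl⟩)
          (Subgroup.mem_sup_right ⟨x.right, rfl⟩)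
  | @quot K₁ K₂ _ _ _ f' hf' hG ih =>
    intro G _ f hf hnt
    exact ih G (f.comp f') (hf.comp hf') hnt

open scoped IsMulCommutative in
private lemma forward (p : ℕ) [Fact p.Prime] :
    ∀ (n : ℕ) (G : Type) [Group G] [Finite G], Nat.card G ≤ n →
      IsSemiabelian G → IsPGroup p G → IsSemiabelianP p G := by
  intro n
  induction n using Nat.strong_induction_on with
  | _ n ih =>
    intro G _ _ hcard hS hp
    rcases subsingleton_or_nontrivial G with hs | hnt
    · exact IsSemiabelianP.quot (1 : PUnit →* G)
        (fun g => ⟨PUnit.unit, Subsingleton.elim _ _⟩) IsSemiabelianP.triv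
    · obtain ⟨A, U, hAn, hAc, hUS, hUne, hsup⟩ :=
        semiabelian_decomp hS G (MonoidHom.id G) Function.surjective_id hnt
      haveI := hAn
      haveI := hAc
      have hUcard : Nat.card U < Nat.card G :=
        lt_of_le_of_ne U.card_le_card_group (fun h => hUne (U.eq_top_of_card_eq h))
      have hUP : IsSemiabelianP p U :=
        ih (Nat.card U) (lt_of_lt_of_le hUcard hcard) U le_rfl hUS (hp.to_subgroup U)
      let φ : U →* MulAut A := MulAut.conjNormal.comp U.subtype
      have hcompat : ∀ u : U, A.subtype.comp ((φ u).toMonoidHom)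
          = (MulAut.conj (U.subtype u)).toMonoidHom.comp A.subtype := by
        intro u
        ext a
        simp [φ, MulAut.conjNormal_apply]
      haveI : Finite (A ⋊[φ] U) := sdp_finite φ
      have hsdp : IsSemiabelianP p (A ⋊[φ] U) :=
        IsSemiabelianP.sdp (hp.to_subgroup A) (hp.to_subgroup U) φ hUP
      let F : (A ⋊[φ] U) →* G := SemidirectProduct.lift A.subtype U.subtype hcompat
      have hFs : Function.Surjective F := by
        intro g
        have hg : g ∈ A ⊔ U := hsup ▸ Subgroup.mem_top g
        rw [← SetLike.mem_coe, Subgroup.normal_mul] at hg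
        obtain ⟨a, ha, u, hu, rfl⟩ := hg
        exact ⟨SemidirectProduct.inl ⟨a, ha⟩ * SemidirectProduct.inr ⟨u, hu⟩, by simp [F]⟩
      exact IsSemiabelianP.quot F hFs hsdp

private lemma reverse {p : ℕ} {G : Type} [Group G] (h : IsSemiabelianP p G) :
    IsSemiabelian G ∧ IsPGroup p G := by
  induction h with
  | triv => exact ⟨IsSemiabelian.triv, fun g => ⟨0, Subsingleton.elim _ _⟩⟩
  | sdp hA hH' φ hH ih => exact ⟨IsSemiabelian.sdp φ ih.1, sdp_isPGroup φ hA hH'⟩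
  | quot f hf hG ih => exact ⟨IsSemiabelian.quot f hf ih.1, ih.2.of_surjective f hf⟩

/-- `S ∩ P = S_p`: a finite group is a semiabelian `p`-group iff it is
semiabelian and a `p`-group. -/
theorem semiabelian_and_pGroup_iff_semiabelianP (p : ℕ) [Fact p.Prime]
    (G : Type) [Group G] [Finite G] :
    (IsSemiabelian G ∧ IsPGroup p G) ↔ IsSemiabelianP p G := by
  constructor
  · rintro ⟨h1, h2⟩
    exact forward p (Nat.card G) G le_rfl h1 h2
  · exact reverse
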